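/- Suppose σ : Σ* × Σ* → Σ* is a total, associative function. For every natural number k ≥ 1, there exist a natural number k' with k' ≤ k + 1 and strings s₁, …, s_{k'} ∈ Σ* such that, writing t = s₁ σ ⋯ σ s_{k'}: (1) at least one of the following holds: (a) there exist at least k distinct strings x ≠ t with σ(x,y) = t for some y, or (b) there exist at least k distinct strings y ≠ t with σ(x,y) = t for some x; and (2) 2 ≤ max{|s₁|, …, |s_{k'}|} ≤ ⌈2 log₂(k + 1)⌉. -/

import Mathlib

private lemma foldl_assoc_aux {α : Type*} (f : α → α → α)
    (h : ∀ x y z, f (f x y) z = f x (f y z)) :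
    ∀ (l : List α) (x b : α), l.foldl f (f x b) = f x (l.foldl f b) := by
  intro l
  induction l with
  | nil => intro x b; rfl
  | cons r rs ih => intro x b; simp only [List.foldl_cons]; rw [h, ih]

private lemma mem_scanl_foldl_aux {α : Type*} (f : α → α → α) :
    ∀ (l : List α) (b : α), l.foldl f b ∈ l.scanl f b := by
  intro l
  induction l with
  | nil => intro b; simp [List.scanl_nil]
  | cons r rs ih =>
    intro b
    simp only [List.scanl_cons, List.foldl_cons, List.singleton_append, List.mem_cons]
    exact Or.inr (ih (f b r))

private lemma scanl_cases_aux {α : Type*} (f : α → α → α)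
    (h : ∀ x y z, f (f x y) z = f x (f y z)) :
    ∀ (l : List α) (b p : α), p ∈ l.scanl f b →
      p = l.foldl f b ∨ ∃ y, f p y = l.foldl f b := by
  intro l
  induction l with
  | nil => intro b p hp; simp only [List.scanl_nil, List.mem_singleton] at hp; simp [hp]
  | cons r rs ih =>
    intro b p hp
    simp only [List.scanl_cons, List.singleton_append, List.mem_cons] at hp
    rcases hp with rfl | hp
    · right
      refine ⟨rs.foldl f r, ?_⟩
      simp only [List.foldl_cons]
      exact (foldl_assoc_aux f h rs p r).symm
    · simpa using ih (f b r) p hp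

private lemma scanl_prefix_aux {α : Type*} (f : α → α → α) :
    ∀ (l : List α) (b p : α), p ∈ l.scanl f b →
      ∃ l', l' <+: l ∧ p = l'.foldl f b := by
  intro l
  induction l with
  | nil =>
    intro b p hp; simp only [List.scanl_nil, List.mem_singleton] at hp
    exact ⟨[], List.nil_prefix, by simp [hp]⟩
  | cons r rs ih =>
    intro b p hp
    simp only [List.scanl_cons, List.singleton_append, List.mem_cons] at hp
    rcases hp with rfl | hp
    · exact ⟨[], List.nil_prefix, rfl⟩
    · obtain ⟨l', hl', hfold⟩ := ih (f b r) p hp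
      exact ⟨r :: l', List.cons_prefix_cons.mpr ⟨rfl, hl'⟩, by simpa using hfold⟩

private lemma scanl_concat_aux {α : Type*} (f : α → α → α) :
    ∀ (l : List α) (b a : α),
      (l ++ [a]).scanl f b = l.scanl f b ++ [f (l.foldl f b) a] := by
  intro l
  induction l with
  | nil => intro b a; simp [List.scanl_nil, List.scanl_cons]
  | cons r rs ih => intro b a; simp [List.scanl_cons, ih]

private lemma foldl_max_const_aux :
    ∀ (l : List ℕ) (L : ℕ), (∀ x ∈ l, x = L) → l.foldl max L = L := by
  intro l
  induction l with
  | nil => intro L _; rfl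
  | cons r rs ih =>
    intro L h
    rw [List.foldl_cons, h r (by simp), max_self]
    exact ih L fun x hx => h x (by simp [hx])

/-- For total associative σ and every k ≥ 1, there exist
k' ≤ k + 1 and strings s₁, …, s_{k'}, with t = s₁ σ ⋯ σ s_{k'} (left fold),
such that (1) at least k distinct strings x ≠ t (resp. y ≠ t) appear as left
(resp. right) arguments of preimages of t, and
(2) 2 ≤ max{|s₁|, …, |s_{k'}|} ≤ ⌈2 log₂(k + 1)⌉. -/
theorem stmt_4 (σ : List Bool → List Bool → List Bool)
    (hassoc : ∀ x y z : List Bool, σ (σ x y) z = σ x (σ y z))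
    (k : ℕ) (hk : 1 ≤ k) :
    ∃ (k' : ℕ) (s₁ : List Bool) (rest : List (List Bool)),
      k' ≤ k + 1 ∧ rest.length + 1 = k' ∧
      ((∃ S : Finset (List Bool), S.card = k ∧
          ∀ x ∈ S, x ≠ rest.foldl σ s₁ ∧ ∃ y : List Bool, σ x y = rest.foldl σ s₁) ∨
       (∃ S : Finset (List Bool), S.card = k ∧
          ∀ y ∈ S, y ≠ rest.foldl σ s₁ ∧ ∃ x : List Bool, σ x y = rest.foldl σ s₁)) ∧
      2 ≤ (rest.map List.length).foldl max s₁.length ∧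
      (rest.map List.length).foldl max s₁.length ≤ ⌈2 * Real.logb 2 (k + 1)⌉₊ := by
  by_contra hcon
  set L : ℕ := ⌈2 * Real.logb 2 (k + 1)⌉₊ with hLdef
  -- numeric facts
  have hk2 : (2:ℝ) ≤ (k:ℝ) + 1 := by
    have : (1:ℝ) ≤ (k:ℝ) := by exact_mod_cast hk
    linarith
  have hlogb1 : (1:ℝ) ≤ Real.logb 2 ((k:ℝ) + 1) := by
    rw [Real.le_logb_iff_rpow_le (by norm_num) (by linarith)]
    simpa using hk2
  have hL2 : 2 ≤ L := by
    have h2 : (2:ℝ) ≤ 2 * Real.logb 2 ((k:ℝ) + 1) := by linarith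
    calc 2 = ⌈(2:ℝ)⌉₊ := by simp
    _ ≤ L := Nat.ceil_le_ceil h2
  have hcard2L : (k+1) * (k+1) ≤ 2 ^ L := by
    have h1 : 2 * Real.logb 2 ((k:ℝ) + 1) ≤ (L:ℝ) := Nat.le_ceil _
    have h2 : ((k:ℝ)+1) * ((k:ℝ)+1) = (2:ℝ) ^ (2 * Real.logb 2 ((k:ℝ) + 1)) := by
      rw [mul_comm (2:ℝ) (Real.logb 2 ((k:ℝ)+1)), Real.rpow_mul (by norm_num),
        Real.rpow_logb (by norm_num) (by norm_num) (by linarith)]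
      rw [Real.rpow_two]; ring
    have h3 : (2:ℝ) ^ (2 * Real.logb 2 ((k:ℝ) + 1)) ≤ (2:ℝ) ^ ((L:ℝ)) :=
      Real.rpow_le_rpow_of_exponent_le (by norm_num) h1
    have h4 : ((k:ℝ)+1) * ((k:ℝ)+1) ≤ (2:ℝ) ^ ((L:ℝ)) := by rw [h2]; exact h3
    rw [Real.rpow_natCast] at h4
    exact_mod_cast h4
  -- the set of strings of length L
  set A : Finset (List Bool) :=
    Finset.image (fun v : Fin L → Bool => List.ofFn v) Finset.univ with hAdef
  have hAcard : A.card = 2 ^ L := by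
    rw [hAdef, Finset.card_image_of_injective _ List.ofFn_injective, Finset.card_univ]
    simp
  have hAlen : ∀ a ∈ A, a.length = L := by
    intro a ha
    rw [hAdef, Finset.mem_image] at ha
    obtain ⟨v, _, rfl⟩ := ha
    simp
  have hAbig : (k+1) * (k+1) ≤ A.card := by rw [hAcard]; exact hcard2L
  -- max-length computation
  have hmaxlen : ∀ (s₁ : List Bool) (rest : List (List Bool)), s₁ ∈ A → (∀ r ∈ rest, r ∈ A) →
      (rest.map List.length).foldl max s₁.length = L := by
    intro s₁ rest hs₁ hrest
    rw [hAlen s₁ hs₁]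
    apply foldl_max_const_aux
    intro x hx
    rw [List.mem_map] at hx
    obtain ⟨r, hr, rfl⟩ := hx
    exact hAlen r (hrest r hr)
  -- the "stuck" case: yields the right-argument conclusion, contradiction
  have hstuckcase : ∀ (s₁ : List Bool) (rest : List (List Bool)), s₁ ∈ A →
      (∀ r ∈ rest, r ∈ A) → rest.length + 1 ≤ k →
      (∀ a ∈ A, σ (rest.foldl σ s₁) a ∈ rest.scanl σ s₁) → False := by
    intro s₁ rest hs₁ hrest hlen hstuck
    set t' := rest.foldl σ s₁ with ht'
    set P : Finset (List Bool) := (rest.scanl σ s₁).toFinset with hPdef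
    have hmaps : ∀ a ∈ A, σ t' a ∈ P := by
      intro a ha; rw [hPdef, List.mem_toFinset]; exact hstuck a ha
    have hPcard : P.card ≤ k := by
      calc P.card ≤ (rest.scanl σ s₁).length := (rest.scanl σ s₁).toFinset_card_le
      _ = rest.length + 1 := List.length_scanl
      _ ≤ k := hlen
    have hlt : P.card * k < A.card := by
      calc P.card * k ≤ k * k := Nat.mul_le_mul_right k hPcard
      _ < (k+1) * (k+1) := by nlinarith
      _ ≤ A.card := hAbig
    obtain ⟨t, htP, htfib⟩ :=
      Finset.exists_lt_card_fiber_of_mul_lt_card_of_maps_to hmaps hlt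
    -- k ≤ card of fiber minus t itself
    have hkle : k ≤ ((A.filter fun a => σ t' a = t).erase t).card := by
      have := Finset.pred_card_le_card_erase
        (s := A.filter fun a => σ t' a = t) (a := t)
      omega
    obtain ⟨S, hS_sub, hScard⟩ := Finset.exists_subset_card_eq hkle
    -- representation of t as a fold of a prefix
    have htmem : t ∈ rest.scanl σ s₁ := by rw [hPdef, List.mem_toFinset] at htP; exact htP
    obtain ⟨l', hl'pref, htfold⟩ := scanl_prefix_aux σ rest s₁ t htmem
    apply hcon
    refine ⟨l'.length + 1, s₁, l', ?_, rfl, ?_, ?_, ?_⟩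
    · have := hl'pref.length_le; omega
    · right
      refine ⟨S, hScard, ?_⟩
      intro y hy
      have hy' := hS_sub hy
      have hyne : y ≠ t := Finset.ne_of_mem_erase hy'
      have hyfilter := Finset.mem_of_mem_erase hy'
      rw [Finset.mem_filter] at hyfilter
      rw [← htfold]
      exact ⟨hyne, t', hyfilter.2⟩
    · rw [hmaxlen s₁ l' hs₁ (fun r hr => hrest r (hl'pref.subset hr))]; exact hL2
    · rw [hmaxlen s₁ l' hs₁ (fun r hr => hrest r (hl'pref.subset hr))]
  -- main induction: build chains with nodup scanl
  have key : ∀ n : ℕ, n ≤ k → ∃ (s₁ : List Bool) (rest : List (List Bool)),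
      s₁ ∈ A ∧ (∀ r ∈ rest, r ∈ A) ∧ rest.length = n ∧ (rest.scanl σ s₁).Nodup := by
    intro n
    induction n with
    | zero =>
      intro _
      have : A.Nonempty := by
        rw [← Finset.card_pos]; nlinarith [hAbig]
      obtain ⟨a, ha⟩ := this
      exact ⟨a, [], ha, by simp, rfl, by simp [List.scanl_nil]⟩
    | succ n ih =>
      intro hn
      obtain ⟨s₁, rest, hs₁, hrest, hlen, hnodup⟩ := ih (by omega)
      by_cases hstuck : ∀ a ∈ A, σ (rest.foldl σ s₁) a ∈ rest.scanl σ s₁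
      · exact absurd hstuck (fun h => hstuckcase s₁ rest hs₁ hrest (by omega) h)
      · push_neg at hstuck
        obtain ⟨a, ha, hnotmem⟩ := hstuck
        refine ⟨s₁, rest ++ [a], hs₁, ?_, by simp [hlen], ?_⟩
        · intro r hr
          rw [List.mem_append] at hr
          rcases hr with hr | hr
          · exact hrest r hr
          · rw [List.mem_singleton] at hr; subst hr; exact ha
        · rw [scanl_concat_aux σ rest s₁ a]
          rw [List.nodup_append]
          exact ⟨hnodup, List.nodup_singleton _, by
            intro x hx hx'' hx'
            rw [List.mem_singleton] at hx'
            subst hx'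
            exact fun h => hnotmem (h ▸ hx)⟩
  -- conclude: chain of length k gives the left-argument conclusion
  obtain ⟨s₁, rest, hs₁, hrest, hlen, hnodup⟩ := key k le_rfl
  set t := rest.foldl σ s₁ with ht
  have htmem : t ∈ rest.scanl σ s₁ := mem_scanl_foldl_aux σ rest s₁
  set S : Finset (List Bool) := (rest.scanl σ s₁).toFinset.erase t with hSdef
  have hScard : S.card = k := by
    rw [hSdef, Finset.card_erase_of_mem (List.mem_toFinset.mpr htmem),
      List.toFinset_card_of_nodup hnodup, List.length_scanl, hlen]
    omega
  apply hcon
  refine ⟨k + 1, s₁, rest, le_rfl, by omega, ?_, ?_, ?_⟩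
  · left
    refine ⟨S, hScard, ?_⟩
    intro x hx
    have hxne : x ≠ t := Finset.ne_of_mem_erase hx
    have hxmem : x ∈ rest.scanl σ s₁ :=
      List.mem_toFinset.mp (Finset.mem_of_mem_erase hx)
    rcases scanl_cases_aux σ hassoc rest s₁ x hxmem with h | h
    · exact absurd h hxne
    · exact ⟨hxne, h⟩
  · rw [hmaxlen s₁ rest hs₁ hrest]; exact hL2
  · rw [hmaxlen s₁ rest hs₁ hrest]
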